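/- Let G be a group and H a finite normal subgroup of G such that the commutator subgroup [G,G] is contained in H. Then for any two elements g₁, g₂ ∈ G there is a positive integer s such that g₁^s and g₂^s commute. -/

import Mathlib

/-- Key step of Lemma 2.4: if `H ◁ G` is finite and `[G,G] ≤ H`, then for any
`g₁, g₂ ∈ G` some positive common power makes them commute. -/
theorem stmt2 {G : Type*} [Group G] (H : Subgroup G) [H.Normal] [Finite H]
    (hcomm : ⁅(⊤ : Subgroup G), (⊤ : Subgroup G)⁆ ≤ H) (g₁ g₂ : G) :
    ∃ s : ℕ, 0 < s ∧ Commute (g₁ ^ s) (g₂ ^ s) := by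
  open scoped commutatorElement in
  have hmem : ∀ t : ℕ, ⁅g₁ ^ t, g₂⁆ ∈ H := fun t =>
    hcomm (Subgroup.commutator_mem_commutator (Subgroup.mem_top _) (Subgroup.mem_top _))
  have hni : ¬ Function.Injective (fun t : ℕ => (⟨⁅g₁ ^ t, g₂⁆, hmem t⟩ : H)) :=
    fun hinj => (Finite.of_injective _ hinj).not_infinite (by infer_instance)
  rw [Function.not_injective_iff] at hni
  obtain ⟨a, b, hab, hne⟩ := hni
  wlog hlt : b < a generalizing a b
  · exact this b a hab.symm hne.symm (by omega)
  refine ⟨a - b, by omega, ?_⟩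
  open scoped commutatorElement in
  have h : ⁅g₁ ^ a, g₂⁆ = ⁅g₁ ^ b, g₂⁆ := congrArg Subtype.val hab
  simp only [commutatorElement_def] at h
  have h2 : g₁ ^ a * g₂ * (g₁ ^ a)⁻¹ = g₁ ^ b * g₂ * (g₁ ^ b)⁻¹ := mul_right_cancel h
  have hc : Commute (g₁ ^ (a - b)) g₂ := by
    have hx : g₁ ^ (a - b) = (g₁ ^ b)⁻¹ * g₁ ^ a := by
      rw [eq_inv_mul_iff_mul_eq, ← pow_add]; congr 1; omega
    unfold Commute SemiconjBy
    rw [hx]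
    calc (g₁ ^ b)⁻¹ * g₁ ^ a * g₂
        = (g₁ ^ b)⁻¹ * (g₁ ^ a * g₂ * (g₁ ^ a)⁻¹) * g₁ ^ a := by group
      _ = (g₁ ^ b)⁻¹ * (g₁ ^ b * g₂ * (g₁ ^ b)⁻¹) * g₁ ^ a := by rw [h2]
      _ = g₂ * ((g₁ ^ b)⁻¹ * g₁ ^ a) := by group
  exact hc.pow_right _
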